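/- arXiv:1406.2527 — 2 statements merged into one kernel-verified Lean document; each statement's English description precedes it below -/
import Mathlib

section
/- Let A and B be finite-dimensional complex C*-algebras with faithful tracial states τ_A, τ_B, and let f : A → B be a unital linear bijection with τ_B(f(x)^n) = τ_A(x^n) for all x ∈ A and all n ≥ 1. Then f preserves spectra: sp(f(x)) = sp(x) for all x ∈ A. -/
open ComplexOrder



open Polynomial in
private lemma my_isUnit_of_aeval_eq_one {A : Type*} [Ring A] [Algebra ℂ A]
    (x : A) (l : ℂ) (p : ℂ[X]) (h : aeval x (p * (X - C l)) = 1) :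
    IsUnit (algebraMap ℂ A l - x) := by
  have h1 : aeval x p * (x - algebraMap ℂ A l) = 1 := by
    rw [← h, map_mul, map_sub, aeval_X, aeval_C]
  have h2 : (x - algebraMap ℂ A l) * aeval x p = 1 := by
    have := h
    rw [show p * (X - C l) = (X - C l) * p by ring, map_mul, map_sub, aeval_X, aeval_C] at this
    exact this
  have : IsUnit (x - algebraMap ℂ A l) := ⟨⟨x - algebraMap ℂ A l, aeval x p, h2, h1⟩, rfl⟩
  simpa [neg_sub] using this.neg

open Polynomial in
private lemma my_mem_spectrum_iff_isRoot {A : Type*} [Ring A] [Algebra ℂ A] [Nontrivial A]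
    [FiniteDimensional ℂ A] (x : A) (l : ℂ) :
    l ∈ spectrum ℂ x ↔ (minpoly ℂ x).IsRoot l := by
  have hint : IsIntegral ℂ x := Algebra.IsIntegral.isIntegral x
  have hμ0 : minpoly ℂ x ≠ 0 := minpoly.ne_zero hint
  constructor
  · intro hl
    by_contra hroot
    obtain ⟨h, hh⟩ := X_sub_C_dvd_sub_C_eval (a := l) (p := minpoly ℂ x)
    set c : ℂ := (minpoly ℂ x).eval l with hcdef
    have hc : c ≠ 0 := hroot
    have hb : aeval x ((-(C c⁻¹ * h)) * (X - C l)) = 1 := by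
      have hpoly2 : (-(C c⁻¹ * h)) * (X - C l) = C c⁻¹ * C c - C c⁻¹ * minpoly ℂ x := by
        linear_combination (C c⁻¹ : ℂ[X]) * hh
      rw [hpoly2, ← C_mul, inv_mul_cancel₀ hc]
      simp [minpoly.aeval]
    exact (spectrum.mem_iff.mp hl) (my_isUnit_of_aeval_eq_one x l _ hb)
  · intro hroot
    rw [spectrum.mem_iff]
    intro hunit
    obtain ⟨q, hq⟩ := dvd_iff_isRoot.mpr hroot
    have hq0 : q ≠ 0 := fun h => hμ0 (by rw [hq, h, mul_zero])
    have hdeg : q.degree < (minpoly ℂ x).degree := by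
      rw [hq, degree_mul, degree_X_sub_C, degree_eq_natDegree hq0]
      exact_mod_cast (by omega : q.natDegree < 1 + q.natDegree)
    have haq : aeval x q = 0 := by
      have h0 : (x - algebraMap ℂ A l) * aeval x q = 0 := by
        have := minpoly.aeval ℂ x
        rw [hq, map_mul, map_sub, aeval_X, aeval_C] at this
        exact this
      have hunit' : IsUnit (x - algebraMap ℂ A l) := by
        simpa [neg_sub] using hunit.neg
      obtain ⟨w, hw⟩ := hunit'.exists_left_inv
      calc aeval x q = w * ((x - algebraMap ℂ A l) * aeval x q) := by rw [← mul_assoc, hw, one_mul]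
        _ = 0 := by rw [h0, mul_zero]
    exact absurd (minpoly.degree_le_of_ne_zero ℂ x hq0 haq) (not_le.mpr hdeg)

open Polynomial in
/-- Spectral idempotent decomposition in a finite-dimensional complex algebra. -/
private lemma my_spec_decomp {A : Type*} [Ring A] [Algebra ℂ A] [Nontrivial A]
    [FiniteDimensional ℂ A] (x : A) :
    ∃ (S : Finset ℂ) (m : ℕ) (e : ℂ → A),
      0 < m ∧
      (∀ l : ℂ, l ∈ S ↔ l ∈ spectrum ℂ x) ∧
      (∑ l ∈ S, e l = 1) ∧
      (∀ l, l ∉ S → e l = 0) ∧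
      (∀ l ∈ S, e l * e l = e l) ∧
      (∀ l ∈ S, e l ≠ 0) ∧
      (∀ l ∈ S, ∀ g : ℂ[X], (X - C l) ^ m ∣ g → aeval x g * e l = 0) := by
  classical
  have hint : IsIntegral ℂ x := Algebra.IsIntegral.isIntegral x
  have hμ0 : minpoly ℂ x ≠ 0 := minpoly.ne_zero hint
  have hmonic : (minpoly ℂ x).Monic := minpoly.monic hint
  set μ := minpoly ℂ x with hμdef
  set m := μ.natDegree with hmdef
  have hm : 0 < m := minpoly.natDegree_pos hint
  set S := μ.roots.toFinset with hSdef
  have hmemS : ∀ l : ℂ, l ∈ S ↔ μ.IsRoot l := by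
    intro l
    rw [hSdef, Multiset.mem_toFinset, mem_roots hμ0]
  have hmemspec : ∀ l : ℂ, l ∈ S ↔ l ∈ spectrum ℂ x := by
    intro l; rw [hmemS l, ← my_mem_spectrum_iff_isRoot]
  have hcount : ∀ l : ℂ, μ.roots.count l ≤ m := fun l =>
    (Multiset.count_le_card l _).trans μ.card_roots'
  have hsplit : μ = ∏ l ∈ S, (X - C l) ^ (μ.roots.count l) := by
    conv_lhs => rw [(IsAlgClosed.splits μ).eq_prod_roots_of_monic hmonic]
    rw [prod_multiset_root_eq_finset_root]
    simp [Polynomial.count_roots, hSdef]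
  have hμΦ : μ ∣ ∏ l ∈ S, (X - C l) ^ m := by
    conv_lhs => rw [hsplit]
    exact Finset.prod_dvd_prod_of_dvd _ _ fun l _ => pow_dvd_pow _ (hcount l)
  have aeval_dvd : ∀ p : ℂ[X], μ ∣ p → aeval x p = 0 := by
    intro p hp
    obtain ⟨q, rfl⟩ := hp
    rw [map_mul, hμdef, minpoly.aeval, zero_mul]
  -- Bezout data for each l ∈ S
  have key : ∀ l : ℂ, ∃ E : ℂ[X], l ∈ S →
      ((X - C l) ^ m ∣ E - 1) ∧ ((∏ k ∈ S.erase l, (X - C k) ^ m) ∣ E) ∧ aeval x E ≠ 0 := by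
    intro l
    by_cases hl : l ∈ S
    · have hco : IsCoprime ((X - C l) ^ m) (∏ k ∈ S.erase l, (X - C k) ^ m) := by
        apply IsCoprime.pow_left
        apply IsCoprime.prod_right
        intro k hk
        exact (isCoprime_X_sub_C_of_isUnit_sub
          (sub_ne_zero_of_ne (Finset.mem_erase.mp hk).1.symm).isUnit).pow_right
      obtain ⟨u, v, huv⟩ := hco
      refine ⟨v * ∏ k ∈ S.erase l, (X - C k) ^ m, fun _ => ⟨⟨-u, by
        rw [← huv]; ring⟩, dvd_mul_left _ _, ?_⟩⟩
      intro hE0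
      have h1 : aeval x (u * (X - C l) ^ m) = 1 := by
        have := congrArg (aeval x) huv
        rw [map_add, map_one, hE0] at this
        simpa using this
      have hunit : IsUnit (algebraMap ℂ A l - x) := by
        apply my_isUnit_of_aeval_eq_one x l (u * (X - C l) ^ (m - 1))
        have hmm : m - 1 + 1 = m := Nat.succ_pred_eq_of_pos hm
        rw [mul_assoc, ← pow_succ, hmm]
        exact h1
      exact (spectrum.mem_iff.mp ((hmemspec l).mp hl)) hunit
    · exact ⟨0, fun h => absurd h hl⟩
  choose E hE using key
  set e : ℂ → A := fun l => if l ∈ S then aeval x (E l) else 0 with hedef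
  refine ⟨S, m, e, hm, hmemspec, ?_, ?_, ?_, ?_, ?_⟩
  · -- sum = 1
    have hdvd : μ ∣ (∑ l ∈ S, E l) - 1 := by
      conv_lhs => rw [hsplit]
      apply Finset.prod_dvd_of_coprime
      · intro a ha b hb hab
        exact (isCoprime_X_sub_C_of_isUnit_sub (sub_ne_zero_of_ne hab).isUnit).pow
      · intro l hl
        have h1 : (X - C l) ^ m ∣ (∑ k ∈ S, E k) - 1 := by
          rw [← Finset.add_sum_erase S E hl]
          have : E l + ∑ k ∈ S.erase l, E k - 1 = (E l - 1) + ∑ k ∈ S.erase l, E k := by ring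
          rw [this]
          apply dvd_add ((hE l hl).1)
          apply Finset.dvd_sum
          intro k hk
          have hkS : k ∈ S := Finset.mem_of_mem_erase hk
          have hlk : l ∈ S.erase k :=
            Finset.mem_erase.mpr ⟨fun h => (Finset.mem_erase.mp hk).1 h.symm, hl⟩
          exact (Finset.dvd_prod_of_mem (fun j => (X - C j) ^ m) hlk).trans (hE k hkS).2.1
        exact (pow_dvd_pow _ (hcount l)).trans h1
    have := aeval_dvd _ hdvd
    rw [map_sub, map_one, sub_eq_zero, map_sum] at this
    rw [← this]
    apply Finset.sum_congr rfl
    intro l hl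
    rw [hedef]; simp [hl]
  · intro l hl; rw [hedef]; simp [hl]
  · -- idempotent
    intro l hl
    have hdvd : μ ∣ E l * E l - E l := by
      refine hμΦ.trans ?_
      rw [← Finset.mul_prod_erase S _ hl]
      have : E l * E l - E l = E l * (E l - 1) := by ring
      rw [this, show (X - C l) ^ m * ∏ k ∈ S.erase l, (X - C k) ^ m
        = (∏ k ∈ S.erase l, (X - C k) ^ m) * (X - C l) ^ m by ring]
      exact mul_dvd_mul (hE l hl).2.1 (hE l hl).1
    have := aeval_dvd _ hdvd
    rw [map_sub, map_mul, sub_eq_zero] at this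
    rw [hedef]; simp only [if_pos hl]; exact this
  · intro l hl
    rw [hedef]; simp only [if_pos hl]
    exact (hE l hl).2.2
  · intro l hl g hg
    have hdvd : μ ∣ g * E l := by
      refine hμΦ.trans ?_
      rw [← Finset.mul_prod_erase S _ hl]
      exact mul_dvd_mul hg (hE l hl).2.1
    have := aeval_dvd _ hdvd
    rw [map_mul] at this
    rw [hedef]; simp only [if_pos hl]; exact this

/-- A faithful tracial functional does not vanish on nonzero idempotents of a
finite-dimensional C*-algebra. -/
private lemma my_trace_idem_ne_zero {A : Type*} [NormedRing A] [StarRing A] [CStarRing A]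
    [NormedAlgebra ℂ A] [StarModule ℂ A] [FiniteDimensional ℂ A]
    (τ : A →ₗ[ℂ] ℂ)
    (htr : ∀ x y : A, τ (x * y) = τ (y * x))
    (hfaith : ∀ x : A, τ (star x * x) = 0 → x = 0)
    {e : A} (he : e * e = e) (hne : e ≠ 0) : τ e ≠ 0 := by
  have hcs : CompleteSpace A := FiniteDimensional.complete ℂ A
  letI : CStarAlgebra A := {}
  set s : A := star e with hsdef
  have hs : s * s = s := by rw [hsdef, ← star_mul, he]
  have hstar_s : star s = e := by rw [hsdef, star_star]
  set a : A := e - s with hadef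
  set h : A := 1 + star a * a with hhdef
  have hstar_a : star a = -a := by rw [hadef]; simp [hsdef]
  -- h is invertible
  have hunit : IsUnit h := by
    by_contra hcu
    have hmem : (-1 : ℝ) ∈ spectrum ℝ (star a * a) := by
      rw [spectrum.mem_iff]
      have : algebraMap ℝ A (-1) - star a * a = -h := by
        rw [hhdef]; simp [Algebra.algebraMap_eq_smul_one]; abel
      rw [this, IsUnit.neg_iff]
      exact hcu
    linarith [spectrum_star_mul_self_nonneg (-1 : ℝ) hmem]
  -- key multiplicative identities
  have hc : star a * a = e * s + s * e - e - s := by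
    rw [hstar_a, hadef]
    have h1 : (-(e - s)) * (e - s) = s * e - s * s - e * e + e * s := by noncomm_ring
    rw [h1, he, hs]; abel
  have he_h : e * h = e * s * e := by
    rw [hhdef, hc]
    have h2 : e * (1 + (e * s + s * e - e - s)) = e + (e * e) * s + e * s * e - e * e - e * s := by
      noncomm_ring
    rw [h2, he]; abel
  have hh_e : h * e = e * s * e := by
    rw [hhdef, hc]
    have h2 : (1 + (e * s + s * e - e - s)) * e = e + e * s * e + s * (e * e) - e * e - s * e := by
      noncomm_ring
    rw [h2, he]; abel
  have hh_s : h * s = s * e * s := by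
    rw [hhdef, hc]
    have h2 : (1 + (e * s + s * e - e - s)) * s = s + e * (s * s) + s * e * s - e * s - s * s := by
      noncomm_ring
    rw [h2, hs]; abel
  have hs_h : s * h = s * e * s := by
    rw [hhdef, hc]
    have h2 : s * (1 + (e * s + s * e - e - s)) = s + s * e * s + (s * s) * e - s * e - s * s := by
      noncomm_ring
    rw [h2, hs]; abel
  have hcomm_e : Commute e h := he_h.trans hh_e.symm
  have hcomm_s : Commute s h := hs_h.trans hh_s.symm
  set hi : A := ↑hunit.unit⁻¹ with hidef
  have hce : Commute e hi := by
    apply Commute.units_inv_right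
    rwa [show (hunit.unit : A) = h from hunit.unit_spec]
  have hcs' : Commute s hi := by
    apply Commute.units_inv_right
    rwa [show (hunit.unit : A) = h from hunit.unit_spec]
  have hinv : h * hi = 1 := hunit.mul_val_inv
  have hinv' : hi * h = 1 := hunit.val_inv_mul
  have hstar_h : star h = h := by
    rw [hhdef]; simp [star_mul, star_star]
  have hstar_hi : star hi = hi := by
    have h1 : star hi * h = 1 := by
      nth_rewrite 1 [← hstar_h]
      rw [← star_mul, hinv, star_one]
    calc star hi = star hi * (h * hi) := by rw [hinv, mul_one]
      _ = (star hi * h) * hi := by rw [mul_assoc]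
      _ = hi := by rw [h1, one_mul]
  set p : A := e * s * hi with hpdef
  have hswap1 : e * s * hi * e = e * h * hi := by
    rw [mul_assoc, ← hce.eq, ← mul_assoc, ← he_h]
  have hpe : p * e = e := by
    rw [hpdef, hswap1, mul_assoc, hinv, mul_one]
  have hep : e * p = p := by
    rw [hpdef, ← mul_assoc, ← mul_assoc, he]
  have hpp : p * p = p := by
    rw [hpdef]
    calc e * s * hi * (e * s * hi) = e * s * hi * e * s * hi := by
          rw [← mul_assoc, ← mul_assoc]
      _ = e * h * hi * s * hi := by rw [hswap1]
      _ = e * h * (hi * s) * hi := by rw [mul_assoc (e * h)]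
      _ = e * h * (s * hi) * hi := by rw [← hcs'.eq]
      _ = e * (h * s) * hi * hi := by rw [← mul_assoc, ← mul_assoc, mul_assoc e h s]
      _ = e * (s * h) * hi * hi := by rw [← hcomm_s.eq]
      _ = e * s * (h * hi) * hi := by rw [← mul_assoc, mul_assoc (e * s)]
      _ = e * s * hi := by rw [hinv, mul_one]
  have hpstar : star p = p := by
    rw [hpdef, star_mul, star_mul, hstar_hi, hstar_s, ← hsdef]
    calc hi * (e * s) = (hi * e) * s := by rw [mul_assoc]
      _ = (e * hi) * s := by rw [← hce.eq]
      _ = e * (hi * s) := by rw [mul_assoc]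
      _ = e * (s * hi) := by rw [← hcs'.eq]
      _ = e * s * hi := by rw [← mul_assoc]
  intro h0
  have hτp : τ p = 0 := by
    rw [← hep, htr e p, hpe]
    exact h0
  have hp0 : p = 0 := hfaith p (by rw [hpstar, hpp]; exact hτp)
  exact hne (by rw [← hpe, hp0, zero_mul])


open Polynomial in
private lemma my_trace_aeval_bridge {A B : Type*} [Ring A] [Algebra ℂ A] [Ring B] [Algebra ℂ B]
    (τA : A →ₗ[ℂ] ℂ) (τB : B →ₗ[ℂ] ℂ) (x : A) (y : B)
    (hpow : ∀ n : ℕ, 1 ≤ n → τB (y ^ n) = τA (x ^ n))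
    (g : ℂ[X]) (hg : g.coeff 0 = 0) :
    τB (aeval y g) = τA (aeval x g) := by
  rw [aeval_eq_sum_range y, aeval_eq_sum_range x, map_sum, map_sum]
  refine Finset.sum_congr rfl fun i _ => ?_
  rw [map_smul, map_smul]
  rcases Nat.eq_zero_or_pos i with h0 | h0
  · subst h0; rw [hg, zero_smul, zero_smul]
  · rw [hpow i h0]
/-- A unital linear bijection between finite-dimensional C*-algebras, with
faithful tracial states, that matches all traces of powers, preserves
spectra. -/
theorem spectrum_preserved_of_trace_powers
    {A B : Type*}
    [NormedRing A] [StarRing A] [CStarRing A] [NormedAlgebra ℂ A]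
    [StarModule ℂ A] [FiniteDimensional ℂ A]
    [NormedRing B] [StarRing B] [CStarRing B] [NormedAlgebra ℂ B]
    [StarModule ℂ B] [FiniteDimensional ℂ B]
    (τA : A →ₗ[ℂ] ℂ) (τB : B →ₗ[ℂ] ℂ)
    -- τA is a faithful tracial state
    (hA1 : τA 1 = 1)
    (hAtr : ∀ x y : A, τA (x * y) = τA (y * x))
    (hApos : ∀ x : A, 0 ≤ τA (star x * x))
    (hAfaith : ∀ x : A, τA (star x * x) = 0 → x = 0)
    -- τB is a faithful tracial state
    (hB1 : τB 1 = 1)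
    (hBtr : ∀ x y : B, τB (x * y) = τB (y * x))
    (hBpos : ∀ x : B, 0 ≤ τB (star x * x))
    (hBfaith : ∀ x : B, τB (star x * x) = 0 → x = 0)
    -- f is a unital linear bijection matching traces of powers
    (f : A ≃ₗ[ℂ] B) (hf1 : f 1 = 1)
    (hpow : ∀ (x : A) (n : ℕ), 1 ≤ n → τB ((f x) ^ n) = τA (x ^ n)) :
    ∀ x : A, spectrum ℂ (f x) = spectrum ℂ x := by
  intro x
  classical
  haveI hntA : Nontrivial A := by
    refine nontrivial_of_ne 1 0 fun h => ?_
    rw [h, map_zero] at hA1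
    exact one_ne_zero hA1.symm
  haveI hntB : Nontrivial B := by
    refine nontrivial_of_ne 1 0 fun h => ?_
    rw [h, map_zero] at hB1
    exact one_ne_zero hB1.symm
  set y : B := f x with hydef
  obtain ⟨SA, mA, eA, hmA, hSA, hsumA, hoffA, hidemA, hneA, hkillA⟩ := my_spec_decomp x
  obtain ⟨SB, mB, eB, hmB, hSB, hsumB, hoffB, hidemB, hneB, hkillB⟩ := my_spec_decomp y
  set M := max mA mB with hMdef
  have hM : 0 < M := lt_of_lt_of_le hmA (le_max_left _ _)
  set wA : ℂ → ℂ := fun l => τA (eA l) with hwAdef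
  set wB : ℂ → ℂ := fun l => τB (eB l) with hwBdef
  have hkillA' : ∀ l ∈ SA, ∀ g : Polynomial ℂ, (Polynomial.X - Polynomial.C l) ^ M ∣ g →
      Polynomial.aeval x g * eA l = 0 := fun l hl g hg =>
    hkillA l hl g ((pow_dvd_pow _ (le_max_left _ _)).trans hg)
  have hkillB' : ∀ l ∈ SB, ∀ g : Polynomial ℂ, (Polynomial.X - Polynomial.C l) ^ M ∣ g →
      Polynomial.aeval y g * eB l = 0 := fun l hl g hg =>
    hkillB l hl g ((pow_dvd_pow _ (le_max_right _ _)).trans hg)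
  -- Step 1: the weights agree away from 0
  have step1 : ∀ l0 : ℂ, l0 ≠ 0 → wA l0 = wB l0 := by
    intro l0 hl0
    set T : Finset ℂ := insert l0 ((SA ∪ SB).erase 0) with hTdef
    set Q : Polynomial ℂ :=
      Polynomial.X ^ M * ∏ k ∈ T.erase l0, (Polynomial.X - Polynomial.C k) ^ M with hQdef
    have hco : IsCoprime ((Polynomial.X - Polynomial.C l0) ^ M) Q := by
      apply IsCoprime.pow_left
      apply IsCoprime.mul_right
      · apply IsCoprime.pow_right
        simpa using (Polynomial.isCoprime_X_sub_C_of_isUnit_sub (a := l0) (b := 0)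
          (by simpa using hl0.isUnit))
      · apply IsCoprime.prod_right
        intro k hk
        exact (Polynomial.isCoprime_X_sub_C_of_isUnit_sub
          (sub_ne_zero_of_ne (Ne.symm (Finset.mem_erase.mp hk).1)).isUnit).pow_right
    obtain ⟨u, v, huv⟩ := hco
    set g : Polynomial ℂ := v * Q with hgdef
    have hgl0 : (Polynomial.X - Polynomial.C l0) ^ M ∣ g - 1 :=
      ⟨-u, by rw [hgdef]; linear_combination huv⟩
    have hgX : Polynomial.X ^ M ∣ g := (dvd_mul_right _ _).trans (dvd_mul_left _ _)
    have hgk : ∀ k, k ∈ T.erase l0 → (Polynomial.X - Polynomial.C k) ^ M ∣ g := by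
      intro k hk
      have h1 : (Polynomial.X - Polynomial.C k) ^ M ∣
          ∏ j ∈ T.erase l0, (Polynomial.X - Polynomial.C j) ^ M :=
        Finset.dvd_prod_of_mem (fun j => (Polynomial.X - Polynomial.C j) ^ M) hk
      exact (h1.trans (dvd_mul_left _ _)).trans (dvd_mul_left _ _)
    have hg0 : g.coeff 0 = 0 := by
      rw [← Polynomial.X_dvd_iff]
      exact (dvd_pow_self Polynomial.X hM.ne').trans hgX
    have htermA : ∀ l ∈ SA, Polynomial.aeval x g * eA l = if l = l0 then eA l0 else 0 := by
      intro l hl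
      by_cases hll0 : l = l0
      · subst hll0
        rw [if_pos rfl]
        have hsplitg : Polynomial.aeval x g = Polynomial.aeval x (g - 1) + 1 := by
          rw [map_sub, map_one, sub_add_cancel]
        rw [hsplitg, add_mul, one_mul, hkillA' l hl (g - 1) hgl0, zero_add]
      · rw [if_neg hll0]
        by_cases hl0' : l = 0
        · subst hl0'
          apply hkillA' 0 hl
          simpa using hgX
        · apply hkillA' l hl
          apply hgk
          exact Finset.mem_erase.mpr ⟨hll0, Finset.mem_insert_of_mem
            (Finset.mem_erase.mpr ⟨hl0', Finset.mem_union_left _ hl⟩)⟩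
    have htermB : ∀ l ∈ SB, Polynomial.aeval y g * eB l = if l = l0 then eB l0 else 0 := by
      intro l hl
      by_cases hll0 : l = l0
      · subst hll0
        rw [if_pos rfl]
        have hsplitg : Polynomial.aeval y g = Polynomial.aeval y (g - 1) + 1 := by
          rw [map_sub, map_one, sub_add_cancel]
        rw [hsplitg, add_mul, one_mul, hkillB' l hl (g - 1) hgl0, zero_add]
      · rw [if_neg hll0]
        by_cases hl0' : l = 0
        · subst hl0'
          apply hkillB' 0 hl
          simpa using hgX
        · apply hkillB' l hl
          apply hgk
          exact Finset.mem_erase.mpr ⟨hll0, Finset.mem_insert_of_mem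
            (Finset.mem_erase.mpr ⟨hl0', Finset.mem_union_right _ hl⟩)⟩
    have hAside : τA (Polynomial.aeval x g) = wA l0 := by
      have h1 : Polynomial.aeval x g = ∑ l ∈ SA, Polynomial.aeval x g * eA l := by
        rw [← Finset.mul_sum, hsumA, mul_one]
      rw [h1, map_sum]
      have h2 : ∀ l ∈ SA, τA (Polynomial.aeval x g * eA l)
          = if l = l0 then τA (eA l0) else 0 := by
        intro l hl; rw [htermA l hl]; split <;> simp
      rw [Finset.sum_congr rfl h2, Finset.sum_ite_eq' SA l0 (fun _ => τA (eA l0))]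
      by_cases hl0A : l0 ∈ SA
      · rw [if_pos hl0A]
      · rw [if_neg hl0A, hwAdef]; simp [hoffA l0 hl0A]
    have hBside : τB (Polynomial.aeval y g) = wB l0 := by
      have h1 : Polynomial.aeval y g = ∑ l ∈ SB, Polynomial.aeval y g * eB l := by
        rw [← Finset.mul_sum, hsumB, mul_one]
      rw [h1, map_sum]
      have h2 : ∀ l ∈ SB, τB (Polynomial.aeval y g * eB l)
          = if l = l0 then τB (eB l0) else 0 := by
        intro l hl; rw [htermB l hl]; split <;> simp
      rw [Finset.sum_congr rfl h2, Finset.sum_ite_eq' SB l0 (fun _ => τB (eB l0))]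
      by_cases hl0B : l0 ∈ SB
      · rw [if_pos hl0B]
      · rw [if_neg hl0B, hwBdef]; simp [hoffB l0 hl0B]
    have hbridge : τB (Polynomial.aeval y g) = τA (Polynomial.aeval x g) :=
      my_trace_aeval_bridge τA τB x y (fun n hn => hpow x n hn) g hg0
    rw [← hAside, ← hBside, hbridge]
  -- Step 2: total weights are 1, hence they also agree at 0
  have hsumwA : ∑ l ∈ insert (0:ℂ) (SA ∪ SB), wA l = 1 := by
    rw [← Finset.sum_subset ((Finset.subset_union_left).trans (Finset.subset_insert _ _))
      (fun l _ hlA => by rw [hwAdef]; simp [hoffA l hlA])]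
    rw [hwAdef]
    simp only
    rw [← map_sum, hsumA, hA1]
  have hsumwB : ∑ l ∈ insert (0:ℂ) (SA ∪ SB), wB l = 1 := by
    rw [← Finset.sum_subset ((Finset.subset_union_right).trans (Finset.subset_insert _ _))
      (fun l _ hlB => by rw [hwBdef]; simp [hoffB l hlB])]
    rw [hwBdef]
    simp only
    rw [← map_sum, hsumB, hB1]
  have hw0 : wA 0 = wB 0 := by
    have h0mem : (0:ℂ) ∈ insert (0:ℂ) (SA ∪ SB) := Finset.mem_insert_self _ _
    have e1 : wA 0 + ∑ l ∈ (insert (0:ℂ) (SA ∪ SB)).erase 0, wA l = 1 := by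
      rw [Finset.add_sum_erase _ wA h0mem]; exact hsumwA
    have e2 : wB 0 + ∑ l ∈ (insert (0:ℂ) (SA ∪ SB)).erase 0, wB l = 1 := by
      rw [Finset.add_sum_erase _ wB h0mem]; exact hsumwB
    have herase : ∑ l ∈ (insert (0:ℂ) (SA ∪ SB)).erase 0, wA l
        = ∑ l ∈ (insert (0:ℂ) (SA ∪ SB)).erase 0, wB l :=
      Finset.sum_congr rfl fun l hl => step1 l (Finset.mem_erase.mp hl).1
    rw [herase] at e1
    linear_combination e1 - e2
  have hwall : ∀ l, wA l = wB l := by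
    intro l
    by_cases h : l = 0
    · subst h; exact hw0
    · exact step1 l h
  -- Conclusion
  have hiffA : ∀ l, l ∈ SA ↔ wA l ≠ 0 := by
    intro l
    constructor
    · intro hl
      exact my_trace_idem_ne_zero τA hAtr hAfaith (hidemA l hl) (hneA l hl)
    · intro hw
      by_contra hl
      exact hw (by rw [hwAdef]; simp [hoffA l hl])
  have hiffB : ∀ l, l ∈ SB ↔ wB l ≠ 0 := by
    intro l
    constructor
    · intro hl
      exact my_trace_idem_ne_zero τB hBtr hBfaith (hidemB l hl) (hneB l hl)
    · intro hw
      by_contra hl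
      exact hw (by rw [hwBdef]; simp [hoffB l hl])
  ext l
  rw [← hSB l, ← hSA l, hiffB l, hiffA l, hwall l]
end

section
/- Let A and B be Hopf algebras over a field k, and f : A → B a unital counit-preserving algebra map. Suppose A = S₁ + S₂ as a vector space, where S₁, S₂ are subcoalgebras, f restricted to S₁ is comultiplicative, f restricted to S₂ is anti-comultiplicative, and the antipode of B is involutive. Then f intertwines antipodes: S_B ∘ f = f ∘ S_A. -/
open TensorProduct

open Coalgebra HopfAlgebra


noncomputable section ConvAux

variable {k : Type*} [CommRing k] {C B : Type*}
  [AddCommGroup C] [Module k C] [Ring B] [Algebra k B]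

/-- Convolution product with an explicit comultiplication. -/
def myconv (Δc : C →ₗ[k] C ⊗[k] C) (g h : C →ₗ[k] B) : C →ₗ[k] B :=
  LinearMap.mul' k B ∘ₗ TensorProduct.map g h ∘ₗ Δc

/-- Convolution unit with an explicit counit. -/
def myunit (εc : C →ₗ[k] k) : C →ₗ[k] B :=
  Algebra.linearMap k B ∘ₗ εc

lemma myconv_apply (Δc : C →ₗ[k] C ⊗[k] C) (g h : C →ₗ[k] B) (c : C) :
    myconv Δc g h c = LinearMap.mul' k B (TensorProduct.map g h (Δc c)) := rfl

lemma myconv_unit_left (Δc : C →ₗ[k] C ⊗[k] C) (εc : C →ₗ[k] k)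
    (hl : εc.rTensor C ∘ₗ Δc = TensorProduct.mk k k C 1)
    (g : C →ₗ[k] B) : myconv Δc (myunit εc) g = g := by
  have aux : LinearMap.mul' k B ∘ₗ TensorProduct.map (myunit (B := B) εc) g
      = g ∘ₗ (TensorProduct.lid k C).toLinearMap ∘ₗ εc.rTensor C := by
    apply TensorProduct.ext'
    intro c₁ c₂
    simp [myunit, Algebra.smul_def]
  refine LinearMap.ext fun c => ?_
  have h1 := congr($aux (Δc c))
  have h2 := congr($hl c)
  simp only [LinearMap.comp_apply] at h1 h2
  rw [myconv_apply, h1, h2]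
  simp

lemma myconv_unit_right (Δc : C →ₗ[k] C ⊗[k] C) (εc : C →ₗ[k] k)
    (hr : εc.lTensor C ∘ₗ Δc = (TensorProduct.mk k C k).flip 1)
    (g : C →ₗ[k] B) : myconv Δc g (myunit εc) = g := by
  have aux : LinearMap.mul' k B ∘ₗ TensorProduct.map g (myunit (B := B) εc)
      = g ∘ₗ (TensorProduct.rid k C).toLinearMap ∘ₗ εc.lTensor C := by
    apply TensorProduct.ext'
    intro c₁ c₂
    simp only [myunit, LinearMap.comp_apply, TensorProduct.map_tmul,
      LinearMap.mul'_apply, Algebra.linearMap_apply, LinearMap.lTensor_tmul,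
      LinearEquiv.coe_coe, TensorProduct.rid_tmul, map_smul, Algebra.smul_def]
    exact (Algebra.commutes _ _).symm
  refine LinearMap.ext fun c => ?_
  have h1 := congr($aux (Δc c))
  have h2 := congr($hr c)
  simp only [LinearMap.comp_apply] at h1 h2
  rw [myconv_apply, h1, h2]
  simp

lemma myconv_assoc (Δc : C →ₗ[k] C ⊗[k] C)
    (hco : ∀ c, TensorProduct.assoc k C C C (Δc.rTensor C (Δc c)) = Δc.lTensor C (Δc c))
    (g h l : C →ₗ[k] B) :
    myconv Δc (myconv Δc g h) l = myconv Δc g (myconv Δc h l) := by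
  have E1 : LinearMap.mul' k B ∘ₗ TensorProduct.map (myconv Δc g h) l
      = (LinearMap.mul' k B ∘ₗ (LinearMap.mul' k B).rTensor B ∘ₗ
          TensorProduct.map (TensorProduct.map g h) l) ∘ₗ Δc.rTensor C := by
    apply TensorProduct.ext'
    intro c₁ c₂
    simp [myconv, LinearMap.rTensor]
  have E2 : LinearMap.mul' k B ∘ₗ TensorProduct.map g (myconv Δc h l)
      = (LinearMap.mul' k B ∘ₗ (LinearMap.mul' k B).lTensor B ∘ₗ
          TensorProduct.map g (TensorProduct.map h l)) ∘ₗ Δc.lTensor C := by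
    apply TensorProduct.ext'
    intro c₁ c₂
    simp [myconv, LinearMap.lTensor]
  have E3 : LinearMap.mul' k B ∘ₗ (LinearMap.mul' k B).rTensor B ∘ₗ
        TensorProduct.map (TensorProduct.map g h) l
      = (LinearMap.mul' k B ∘ₗ (LinearMap.mul' k B).lTensor B ∘ₗ
          TensorProduct.map g (TensorProduct.map h l)) ∘ₗ
          (TensorProduct.assoc k C C C).toLinearMap := by
    apply TensorProduct.ext_threefold
    intro x y z
    simp [mul_assoc]
  refine LinearMap.ext fun c => ?_
  have h1 := congr($E1 (Δc c))
  have h2 := congr($E2 (Δc c))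
  have h3 := congr($E3 ((Δc.rTensor C) (Δc c)))
  simp only [LinearMap.comp_apply, LinearEquiv.coe_coe] at h1 h2 h3
  rw [myconv_apply, h1, h3, hco c, myconv_apply, h2]

lemma myconv_inv_unique (Δc : C →ₗ[k] C ⊗[k] C) (εc : C →ₗ[k] k)
    (hco : ∀ c, TensorProduct.assoc k C C C (Δc.rTensor C (Δc c)) = Δc.lTensor C (Δc c))
    (hlid : εc.rTensor C ∘ₗ Δc = TensorProduct.mk k k C 1)
    (hrid : εc.lTensor C ∘ₗ Δc = (TensorProduct.mk k C k).flip 1)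
    {g l r : C →ₗ[k] B}
    (hl : myconv Δc l g = myunit εc) (hr : myconv Δc g r = myunit εc) :
    l = r := by
  calc l = myconv Δc l (myunit εc) := (myconv_unit_right _ _ hrid _).symm
    _ = myconv Δc l (myconv Δc g r) := by rw [hr]
    _ = myconv Δc (myconv Δc l g) r := (myconv_assoc _ hco _ _ _).symm
    _ = myconv Δc (myunit εc) r := by rw [hl]
    _ = r := myconv_unit_left _ _ hlid _

end ConvAux

noncomputable section HopfAux
variable {k : Type*} [CommRing k] {B : Type*} [Ring B] [HopfAlgebra k B]

lemma conv_antipode_id :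
    LinearMap.mul' k B ∘ₗ TensorProduct.map (antipode (R := k)) LinearMap.id ∘ₗ
      Coalgebra.comul = Algebra.linearMap k B ∘ₗ Coalgebra.counit := by
  rw [show TensorProduct.map (antipode (R := k) (A := B)) LinearMap.id
      = (antipode (R := k) (A := B)).rTensor B from rfl]
  exact HopfAlgebra.mul_antipode_rTensor_comul

lemma conv_id_antipode :
    LinearMap.mul' k B ∘ₗ TensorProduct.map LinearMap.id (antipode (R := k)) ∘ₗ
      Coalgebra.comul = Algebra.linearMap k B ∘ₗ Coalgebra.counit := by
  rw [show TensorProduct.map LinearMap.id (antipode (R := k) (A := B))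
      = (antipode (R := k) (A := B)).lTensor B from rfl]
  exact HopfAlgebra.mul_antipode_lTensor_comul

lemma my_antipode_one : antipode (R := k) (1 : B) = 1 := by
  have := HopfAlgebra.mul_antipode_rTensor_comul_apply (R := k) (1 : B)
  simpa [Algebra.TensorProduct.one_def] using this

lemma my_antipode_algebraMap (r : k) :
    antipode (R := k) (algebraMap k B r) = algebraMap k B r := by
  rw [Algebra.algebraMap_eq_smul_one, map_smul, my_antipode_one]

end HopfAux

noncomputable section TensorSquare

variable (k B : Type*) [CommRing k] [Ring B] [Bialgebra k B]

/-- Comultiplication on `B ⊗ B`. -/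
def δT : B ⊗[k] B →ₗ[k] (B ⊗[k] B) ⊗[k] (B ⊗[k] B) :=
  (tensorTensorTensorComm k B B B B).toLinearMap ∘ₗ
    TensorProduct.map Coalgebra.comul Coalgebra.comul

/-- Counit on `B ⊗ B`. -/
def εT : B ⊗[k] B →ₗ[k] k :=
  LinearMap.mul' k k ∘ₗ TensorProduct.map Coalgebra.counit Coalgebra.counit

lemma δT_apply (x y : B) : δT k B (x ⊗ₜ y)
    = tensorTensorTensorComm k B B B B
        ((Coalgebra.comul x) ⊗ₜ (Coalgebra.comul y)) := rfl

lemma K1 : ((TensorProduct.map (Coalgebra.comul (R := k) (A := B))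
        Coalgebra.comul).rTensor (B ⊗[k] B)) ∘ₗ
      (tensorTensorTensorComm k B B B B).toLinearMap
    = (tensorTensorTensorComm k (B ⊗[k] B) B (B ⊗[k] B) B).toLinearMap ∘ₗ
      TensorProduct.map ((Coalgebra.comul (R := k)).rTensor B)
        ((Coalgebra.comul (R := k)).rTensor B) := by
  apply TensorProduct.ext_fourfold'
  intro x y p q
  simp [LinearMap.rTensor]

lemma K2 : ((TensorProduct.map (Coalgebra.comul (R := k) (A := B))
        Coalgebra.comul).lTensor (B ⊗[k] B)) ∘ₗ
      (tensorTensorTensorComm k B B B B).toLinearMap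
    = (tensorTensorTensorComm k B (B ⊗[k] B) B (B ⊗[k] B)).toLinearMap ∘ₗ
      TensorProduct.map ((Coalgebra.comul (R := k)).lTensor B)
        ((Coalgebra.comul (R := k)).lTensor B) := by
  apply TensorProduct.ext_fourfold'
  intro x y p q
  simp [LinearMap.lTensor]

set_option maxHeartbeats 1000000 in
set_option synthInstance.maxHeartbeats 400000 in
lemma STR :
    (TensorProduct.assoc k (B ⊗[k] B) (B ⊗[k] B) (B ⊗[k] B)).toLinearMap ∘ₗ
        ((tensorTensorTensorComm k B B B B).toLinearMap.rTensor (B ⊗[k] B)) ∘ₗ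
        (tensorTensorTensorComm k (B ⊗[k] B) B (B ⊗[k] B) B).toLinearMap ∘ₗ
        TensorProduct.map (TensorProduct.assoc k B B B).symm.toLinearMap
          (TensorProduct.assoc k B B B).symm.toLinearMap
      = ((tensorTensorTensorComm k B B B B).toLinearMap.lTensor (B ⊗[k] B)) ∘ₗ
          (tensorTensorTensorComm k B (B ⊗[k] B) B (B ⊗[k] B)).toLinearMap := by
  apply TensorProduct.ext_fourfold'
  intro x n p q
  induction n using TensorProduct.induction_on with
  | zero => simp
  | add a b ha hb => simp only [tmul_add, add_tmul, map_add, ha, hb]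
  | tmul y z =>
    induction q using TensorProduct.induction_on with
    | zero => simp
    | add a b ha hb => simp only [tmul_add, add_tmul, map_add, ha, hb]
    | tmul u v => simp [LinearMap.rTensor, LinearMap.lTensor]

lemma coassoc_T :
    ∀ c, (TensorProduct.assoc k (B ⊗[k] B) (B ⊗[k] B) (B ⊗[k] B))
        (((δT k B).rTensor (B ⊗[k] B)) (δT k B c))
      = ((δT k B).lTensor (B ⊗[k] B)) (δT k B c) := by
  intro c
  have hmap : TensorProduct.map
        ((Coalgebra.comul (R := k) (A := B)).rTensor B ∘ₗ Coalgebra.comul)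
        ((Coalgebra.comul (R := k)).rTensor B ∘ₗ Coalgebra.comul)
      = TensorProduct.map (TensorProduct.assoc k B B B).symm.toLinearMap
            (TensorProduct.assoc k B B B).symm.toLinearMap ∘ₗ
          TensorProduct.map
            ((Coalgebra.comul (R := k)).lTensor B ∘ₗ Coalgebra.comul)
            ((Coalgebra.comul (R := k)).lTensor B ∘ₗ Coalgebra.comul) := by
    rw [← TensorProduct.map_comp]
    congr 1 <;>
    · rw [← Coalgebra.coassoc_symm]
  set z0 := TensorProduct.map (Coalgebra.comul (R := k) (A := B)) Coalgebra.comul c with hz0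
  set w := TensorProduct.map
      ((Coalgebra.comul (R := k) (A := B)).lTensor B ∘ₗ Coalgebra.comul)
      ((Coalgebra.comul (R := k)).lTensor B ∘ₗ Coalgebra.comul) c with hw
  have hmc1 : TensorProduct.map ((Coalgebra.comul (R := k) (A := B)).rTensor B)
        ((Coalgebra.comul (R := k)).rTensor B) z0
      = TensorProduct.map ((Coalgebra.comul (R := k)).rTensor B ∘ₗ Coalgebra.comul)
          ((Coalgebra.comul (R := k)).rTensor B ∘ₗ Coalgebra.comul) c := by
    rw [hz0, ← LinearMap.comp_apply, ← TensorProduct.map_comp]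
  have hmc2 : TensorProduct.map ((Coalgebra.comul (R := k) (A := B)).lTensor B)
        ((Coalgebra.comul (R := k)).lTensor B) z0
      = w := by
    rw [hz0, hw, ← LinearMap.comp_apply, ← TensorProduct.map_comp]
  have eL : (δT k B).rTensor (B ⊗[k] B) (δT k B c)
      = (tensorTensorTensorComm k B B B B).toLinearMap.rTensor (B ⊗[k] B)
          ((tensorTensorTensorComm k (B ⊗[k] B) B (B ⊗[k] B) B)
            (TensorProduct.map (TensorProduct.assoc k B B B).symm.toLinearMap
              (TensorProduct.assoc k B B B).symm.toLinearMap w)) := by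
    have h0 : (δT k B).rTensor (B ⊗[k] B) (δT k B c)
        = (tensorTensorTensorComm k B B B B).toLinearMap.rTensor (B ⊗[k] B)
            (((TensorProduct.map (Coalgebra.comul (R := k) (A := B))
                Coalgebra.comul).rTensor (B ⊗[k] B))
              ((tensorTensorTensorComm k B B B B) z0)) := by
      conv_lhs => rw [δT, LinearMap.rTensor_comp]
      rfl
    rw [h0]
    have h1 := congr($(K1 k B) z0)
    simp only [LinearMap.comp_apply, LinearEquiv.coe_coe] at h1
    rw [h1, hmc1, congr($hmap c)]
    rfl
  have eR : (δT k B).lTensor (B ⊗[k] B) (δT k B c)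
      = (tensorTensorTensorComm k B B B B).toLinearMap.lTensor (B ⊗[k] B)
          ((tensorTensorTensorComm k B (B ⊗[k] B) B (B ⊗[k] B)) w) := by
    have h0 : (δT k B).lTensor (B ⊗[k] B) (δT k B c)
        = (tensorTensorTensorComm k B B B B).toLinearMap.lTensor (B ⊗[k] B)
            (((TensorProduct.map (Coalgebra.comul (R := k) (A := B))
                Coalgebra.comul).lTensor (B ⊗[k] B))
              ((tensorTensorTensorComm k B B B B) z0)) := by
      conv_lhs => rw [δT, LinearMap.lTensor_comp]
      rfl
    rw [h0]
    have h1 := congr($(K2 k B) z0)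
    simp only [LinearMap.comp_apply, LinearEquiv.coe_coe] at h1
    rw [h1, hmc2]
  have hstr := congr($(STR k B) w)
  simp only [LinearMap.comp_apply, LinearEquiv.coe_coe] at hstr
  rw [eL, eR, ← hstr]

lemma KE1 : ((TensorProduct.map (Coalgebra.counit (R := k) (A := B))
        Coalgebra.counit).rTensor (B ⊗[k] B)) ∘ₗ
      (tensorTensorTensorComm k B B B B).toLinearMap
    = (tensorTensorTensorComm k k B k B).toLinearMap ∘ₗ
      TensorProduct.map ((Coalgebra.counit (R := k) (A := B)).rTensor B)
        ((Coalgebra.counit (R := k) (A := B)).rTensor B) := by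
  apply TensorProduct.ext_fourfold'
  intro x y p q
  simp [LinearMap.rTensor]

lemma KE2 : ((TensorProduct.map (Coalgebra.counit (R := k) (A := B))
        Coalgebra.counit).lTensor (B ⊗[k] B)) ∘ₗ
      (tensorTensorTensorComm k B B B B).toLinearMap
    = (tensorTensorTensorComm k B k B k).toLinearMap ∘ₗ
      TensorProduct.map ((Coalgebra.counit (R := k) (A := B)).lTensor B)
        ((Coalgebra.counit (R := k) (A := B)).lTensor B) := by
  apply TensorProduct.ext_fourfold'
  intro x y p q
  simp [LinearMap.lTensor]

lemma FE1 : ((LinearMap.mul' k k).rTensor (B ⊗[k] B)) ∘ₗ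
      (tensorTensorTensorComm k k B k B).toLinearMap ∘ₗ
      TensorProduct.map (TensorProduct.mk k k B 1) (TensorProduct.mk k k B 1)
    = TensorProduct.mk k k (B ⊗[k] B) 1 := by
  apply TensorProduct.ext'
  intro x y
  simp [LinearMap.rTensor]

lemma FE2 : ((LinearMap.mul' k k).lTensor (B ⊗[k] B)) ∘ₗ
      (tensorTensorTensorComm k B k B k).toLinearMap ∘ₗ
      TensorProduct.map ((TensorProduct.mk k B k).flip 1) ((TensorProduct.mk k B k).flip 1)
    = (TensorProduct.mk k (B ⊗[k] B) k).flip 1 := by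
  apply TensorProduct.ext'
  intro x y
  simp [LinearMap.lTensor]

lemma counit_rT : (εT k B).rTensor (B ⊗[k] B) ∘ₗ δT k B
    = TensorProduct.mk k k (B ⊗[k] B) 1 := by
  refine LinearMap.ext fun c => ?_
  have h0 : (εT k B).rTensor (B ⊗[k] B) (δT k B c)
      = ((LinearMap.mul' k k).rTensor (B ⊗[k] B))
          (((TensorProduct.map (Coalgebra.counit (R := k) (A := B))
              Coalgebra.counit).rTensor (B ⊗[k] B))
            ((tensorTensorTensorComm k B B B B)
              (TensorProduct.map Coalgebra.comul Coalgebra.comul c))) := by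
    conv_lhs => rw [εT, LinearMap.rTensor_comp]
    rfl
  have h1 := congr($(KE1 k B) (TensorProduct.map (Coalgebra.comul (R := k) (A := B))
      Coalgebra.comul c))
  simp only [LinearMap.comp_apply, LinearEquiv.coe_coe] at h1
  have h2 : TensorProduct.map ((Coalgebra.counit (R := k) (A := B)).rTensor B)
        ((Coalgebra.counit (R := k) (A := B)).rTensor B)
        (TensorProduct.map Coalgebra.comul Coalgebra.comul c)
      = TensorProduct.map (TensorProduct.mk k k B 1) (TensorProduct.mk k k B 1) c := by
    rw [← LinearMap.comp_apply, ← TensorProduct.map_comp,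
      Coalgebra.rTensor_counit_comp_comul]
  have h3 := congr($(FE1 k B) c)
  simp only [LinearMap.comp_apply, LinearEquiv.coe_coe] at h3
  rw [LinearMap.comp_apply, h0, h1, h2, h3]

lemma counit_lT : (εT k B).lTensor (B ⊗[k] B) ∘ₗ δT k B
    = (TensorProduct.mk k (B ⊗[k] B) k).flip 1 := by
  refine LinearMap.ext fun c => ?_
  have h0 : (εT k B).lTensor (B ⊗[k] B) (δT k B c)
      = ((LinearMap.mul' k k).lTensor (B ⊗[k] B))
          (((TensorProduct.map (Coalgebra.counit (R := k) (A := B))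
              Coalgebra.counit).lTensor (B ⊗[k] B))
            ((tensorTensorTensorComm k B B B B)
              (TensorProduct.map Coalgebra.comul Coalgebra.comul c))) := by
    conv_lhs => rw [εT, LinearMap.lTensor_comp]
    rfl
  have h1 := congr($(KE2 k B) (TensorProduct.map (Coalgebra.comul (R := k) (A := B))
      Coalgebra.comul c))
  simp only [LinearMap.comp_apply, LinearEquiv.coe_coe] at h1
  have h2 : TensorProduct.map ((Coalgebra.counit (R := k) (A := B)).lTensor B)
        ((Coalgebra.counit (R := k) (A := B)).lTensor B)
        (TensorProduct.map Coalgebra.comul Coalgebra.comul c)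
      = TensorProduct.map ((TensorProduct.mk k B k).flip 1)
          ((TensorProduct.mk k B k).flip 1) c := by
    rw [← LinearMap.comp_apply, ← TensorProduct.map_comp,
      Coalgebra.lTensor_counit_comp_comul]
  have h3 := congr($(FE2 k B) c)
  simp only [LinearMap.comp_apply, LinearEquiv.coe_coe] at h3
  rw [LinearMap.comp_apply, h0, h1, h2, h3]

end TensorSquare

noncomputable section AntiMul
variable {k B : Type*} [CommRing k] [Ring B] [HopfAlgebra k B]

/-- A representation of `comul (x * y)` from representations of `x` and `y`. -/
def mulRepr {x y : B} {ι κ : Type*} (rx : Coalgebra.Repr k x ι) (ry : Coalgebra.Repr k y κ) :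
    Coalgebra.Repr k (x * y) (ι × κ) where
  index := rx.index ×ˢ ry.index
  left p := rx.left p.1 * ry.left p.2
  right p := rx.right p.1 * ry.right p.2
  eq := by
    rw [Finset.sum_product]
    rw [Bialgebra.comul_mul, ← rx.eq, ← ry.eq, Finset.sum_mul_sum]
    simp [Algebra.TensorProduct.tmul_mul_tmul]

lemma δT_repr {x y : B} {ι κ : Type*} (rx : Coalgebra.Repr k x ι) (ry : Coalgebra.Repr k y κ) :
    δT k B (x ⊗ₜ y) = ∑ i ∈ rx.index, ∑ j ∈ ry.index,
      (rx.left i ⊗ₜ[k] ry.left j) ⊗ₜ[k] (rx.right i ⊗ₜ[k] ry.right j) := by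
  rw [δT_apply, ← rx.eq, ← ry.eq, TensorProduct.sum_tmul]
  rw [map_sum]
  refine Finset.sum_congr rfl fun i _ => ?_
  rw [TensorProduct.tmul_sum, map_sum]
  refine Finset.sum_congr rfl fun j _ => ?_
  simp

lemma conv_SM_M : myconv (δT k B)
      ((antipode (R := k)) ∘ₗ LinearMap.mul' k B) (LinearMap.mul' k B)
    = myunit (εT k B) := by
  apply TensorProduct.ext'
  intro x y
  obtain ⟨rx⟩ : Nonempty (Coalgebra.Repr k x (_ × _)) := ⟨Coalgebra.Repr.arbitrary k x⟩
  obtain ⟨ry⟩ : Nonempty (Coalgebra.Repr k y (_ × _)) := ⟨Coalgebra.Repr.arbitrary k y⟩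
  rw [myconv_apply, δT_repr rx ry]
  simp only [map_sum, TensorProduct.map_tmul, LinearMap.comp_apply, LinearMap.mul'_apply,
    LinearEquiv.coe_coe, TensorProduct.comm_tmul]
  calc ∑ i ∈ rx.index, ∑ j ∈ ry.index,
          antipode (R := k) (rx.left i * ry.left j) * (rx.right i * ry.right j)
      = ∑ p ∈ rx.index ×ˢ ry.index,
          antipode (R := k) ((mulRepr rx ry).left p) * ((mulRepr rx ry).right p) := by
        rw [Finset.sum_product]
        rfl
    _ = algebraMap k B (Coalgebra.counit (x * y)) := sum_antipode_mul_eq_algebraMap_counit (mulRepr rx ry)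
    _ = myunit (εT k B) (x ⊗ₜ y) := by
        simp [myunit, εT, Bialgebra.counit_mul]

lemma conv_M_MSS : myconv (δT k B) (LinearMap.mul' k B)
      (LinearMap.mul' k B ∘ₗ TensorProduct.map (antipode (R := k)) (antipode (R := k)) ∘ₗ
        (TensorProduct.comm k B B).toLinearMap)
    = myunit (εT k B) := by
  apply TensorProduct.ext'
  intro x y
  obtain ⟨rx⟩ : Nonempty (Coalgebra.Repr k x (_ × _)) := ⟨Coalgebra.Repr.arbitrary k x⟩
  obtain ⟨ry⟩ : Nonempty (Coalgebra.Repr k y (_ × _)) := ⟨Coalgebra.Repr.arbitrary k y⟩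
  rw [myconv_apply, δT_repr rx ry]
  simp only [map_sum, TensorProduct.map_tmul, LinearMap.comp_apply, LinearMap.mul'_apply,
    LinearEquiv.coe_coe, TensorProduct.comm_tmul]
  calc ∑ i ∈ rx.index, ∑ j ∈ ry.index,
          (rx.left i * ry.left j) *
            (antipode (R := k) (ry.right j) * antipode (R := k) (rx.right i))
      = ∑ i ∈ rx.index, (rx.left i *
          (∑ j ∈ ry.index, ry.left j * antipode (R := k) (ry.right j))) *
          antipode (R := k) (rx.right i) := by
        refine Finset.sum_congr rfl fun i _ => ?_
        rw [Finset.mul_sum, Finset.sum_mul]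
        exact Finset.sum_congr rfl fun j _ => by simp [mul_assoc]
    _ = ∑ i ∈ rx.index, (rx.left i * algebraMap k B (Coalgebra.counit y)) *
          antipode (R := k) (rx.right i) := by
        rw [sum_mul_antipode_eq_algebraMap_counit ry]
    _ = algebraMap k B (Coalgebra.counit y) *
          ∑ i ∈ rx.index, rx.left i * antipode (R := k) (rx.right i) := by
        rw [Finset.mul_sum]
        exact Finset.sum_congr rfl fun i _ => by
          rw [show rx.left i * algebraMap k B (Coalgebra.counit y)
              = algebraMap k B (Coalgebra.counit y) * rx.left i from
            (Algebra.commutes _ _).symm, mul_assoc]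
    _ = myunit (εT k B) (x ⊗ₜ y) := by
        rw [sum_mul_antipode_eq_algebraMap_counit rx, ← map_mul, mul_comm]
        simp [myunit, εT]

lemma antipode_mul_anticomm (x y : B) :
    antipode (R := k) (x * y) = antipode (R := k) y * antipode (R := k) x := by
  have h := myconv_inv_unique (δT k B) (εT k B) (coassoc_T k B) (counit_rT k B)
    (counit_lT k B) (conv_SM_M (k := k) (B := B)) (conv_M_MSS (k := k) (B := B))
  have := congr($h (x ⊗ₜ y))
  simpa using this

end AntiMul

noncomputable section Skew
variable {k B : Type*} [CommRing k] [Ring B] [HopfAlgebra k B]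

lemma skew_sum (hSB : ∀ b : B, antipode (R := k) (antipode (R := k) b) = b)
    {b : B} {ι : Type*} (r : Coalgebra.Repr k b ι) :
    ∑ i ∈ r.index, antipode (R := k) (r.right i) * r.left i
      = algebraMap k B (Coalgebra.counit b) := by
  have h1 : antipode (R := k)
      (∑ i ∈ r.index, antipode (R := k) (r.right i) * r.left i)
      = algebraMap k B (Coalgebra.counit b) := by
    rw [map_sum]
    have : ∀ i ∈ r.index, antipode (R := k) (antipode (R := k) (r.right i) * r.left i)
        = antipode (R := k) (r.left i) * r.right i := fun i _ => by
      rw [antipode_mul_anticomm, hSB]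
    rw [Finset.sum_congr rfl this]
    exact sum_antipode_mul_eq_algebraMap_counit r
  calc ∑ i ∈ r.index, antipode (R := k) (r.right i) * r.left i
      = antipode (R := k) (antipode (R := k)
          (∑ i ∈ r.index, antipode (R := k) (r.right i) * r.left i)) := (hSB _).symm
    _ = antipode (R := k) (algebraMap k B (Coalgebra.counit b)) := by rw [h1]
    _ = algebraMap k B (Coalgebra.counit b) := my_antipode_algebraMap _

lemma skew_map (hSB : ∀ b : B, antipode (R := k) (antipode (R := k) b) = b) (b : B) :
    LinearMap.mul' k B (TensorProduct.map (antipode (R := k)) LinearMap.id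
      (TensorProduct.comm k B B (Coalgebra.comul b)))
      = algebraMap k B (Coalgebra.counit b) := by
  obtain ⟨r⟩ : Nonempty (Coalgebra.Repr k b (_ × _)) := ⟨Coalgebra.Repr.arbitrary k b⟩
  rw [← r.eq, map_sum, map_sum, map_sum]
  simp only [TensorProduct.comm_tmul, TensorProduct.map_tmul, LinearMap.mul'_apply,
    LinearMap.id_coe, id_eq]
  exact skew_sum hSB r

end Skew



/-- Let `A`, `B` be Hopf algebras over a field `k` and `f : A → B` a unital
counit-preserving algebra map.  If `A = S₁ + S₂` with `S₁`, `S₂`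
subcoalgebras, `f` comultiplicative on `S₁` and anti-comultiplicative on
`S₂`, and the antipode of `B` is involutive, then `f` intertwines the
antipodes: `S_B ∘ f = f ∘ S_A`. -/
theorem intertwines_antipodes_of_piecewise_comultiplicative
    {k A B : Type*} [Field k] [Ring A] [Ring B]
    [HopfAlgebra k A] [HopfAlgebra k B]
    (f : A →ₐ[k] B)
    (hcounit : ∀ a : A, Coalgebra.counit (R := k) (f a)
      = Coalgebra.counit (R := k) a)
    (S₁ S₂ : Submodule k A)
    (hspan : S₁ ⊔ S₂ = ⊤)
    -- `S₁` and `S₂` are subcoalgebras of `A`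
    (hsub₁ : ∀ w ∈ S₁, Coalgebra.comul (R := k) w ∈
      LinearMap.range (TensorProduct.map S₁.subtype S₁.subtype))
    (hsub₂ : ∀ w ∈ S₂, Coalgebra.comul (R := k) w ∈
      LinearMap.range (TensorProduct.map S₂.subtype S₂.subtype))
    -- `f` is comultiplicative on `S₁`
    (hco : ∀ w ∈ S₁, Coalgebra.comul (R := k) (f w)
      = (TensorProduct.map f.toLinearMap f.toLinearMap)
          (Coalgebra.comul (R := k) w))
    -- `f` is anti-comultiplicative on `S₂`
    (hanti : ∀ w ∈ S₂, Coalgebra.comul (R := k) (f w)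
      = (TensorProduct.comm k B B)
          ((TensorProduct.map f.toLinearMap f.toLinearMap)
            (Coalgebra.comul (R := k) w)))
    -- the antipode of `B` is involutive
    (hSB : ∀ b : B, HopfAlgebra.antipode (R := k)
      (HopfAlgebra.antipode (R := k) b) = b) :
    ∀ a : A, HopfAlgebra.antipode (R := k) (f a)
      = f (HopfAlgebra.antipode (R := k) a) := by
  -- convolution setup on `Hom(A, B)`
  have hcoA : ∀ c : A, TensorProduct.assoc k A A A
      ((Coalgebra.comul (R := k)).rTensor A (Coalgebra.comul c))
      = (Coalgebra.comul (R := k)).lTensor A (Coalgebra.comul c) :=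
    fun c => Coalgebra.coassoc_apply c
  set L : A →ₗ[k] B := antipode (R := k) ∘ₗ f.toLinearMap with hL
  set R : A →ₗ[k] B := f.toLinearMap ∘ₗ antipode (R := k) with hR
  -- `R` is a right convolution inverse of `f`
  have hr : myconv (Coalgebra.comul (R := k)) f.toLinearMap R
      = myunit (Coalgebra.counit (R := k)) := by
    refine LinearMap.ext fun a => ?_
    obtain ⟨r⟩ : Nonempty (Coalgebra.Repr k a (_ × _)) := ⟨Coalgebra.Repr.arbitrary k a⟩
    rw [myconv_apply, ← r.eq, map_sum, map_sum]
    simp only [TensorProduct.map_tmul, LinearMap.mul'_apply, LinearMap.comp_apply,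
      AlgHom.toLinearMap_apply, hR]
    calc ∑ i ∈ r.index, f (r.left i) * f (antipode (R := k) (r.right i))
        = f (∑ i ∈ r.index, r.left i * antipode (R := k) (r.right i)) := by
          rw [map_sum]; exact Finset.sum_congr rfl fun i _ => (map_mul f _ _).symm
      _ = f (algebraMap k A (Coalgebra.counit a)) := by rw [sum_mul_antipode_eq_algebraMap_counit r]
      _ = myunit (Coalgebra.counit (R := k)) a := by
          simp [myunit, AlgHom.commutes]
  -- `L` is a left convolution inverse of `f`
  have hl : myconv (Coalgebra.comul (R := k)) L f.toLinearMap
      = myunit (Coalgebra.counit (R := k)) := by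
    have key : ∀ w : A, w ∈ S₁ ∨ w ∈ S₂ →
        myconv (Coalgebra.comul (R := k)) L f.toLinearMap w
          = myunit (Coalgebra.counit (R := k)) w := by
      rintro w hw
      have hcc : ∀ z : B ⊗[k] B, TensorProduct.comm k B B (TensorProduct.comm k B B z)
          = z := fun z => by
        induction z using TensorProduct.induction_on with
        | zero => simp
        | add a b ha hb => simp [ha, hb]
        | tmul => simp
      have hmap0 : TensorProduct.map L f.toLinearMap
          = TensorProduct.map (antipode (R := k)) LinearMap.id ∘ₗ
              TensorProduct.map f.toLinearMap f.toLinearMap := by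
        rw [← TensorProduct.map_comp, LinearMap.id_comp]
      have hmap : TensorProduct.map L f.toLinearMap (Coalgebra.comul (R := k) w)
          = TensorProduct.map (antipode (R := k)) LinearMap.id
              (TensorProduct.map f.toLinearMap f.toLinearMap
                (Coalgebra.comul (R := k) w)) := by
        rw [hmap0]; rfl
      rcases hw with hw | hw
      · rw [myconv_apply, hmap, ← hco w hw]
        have : LinearMap.mul' k B (TensorProduct.map (antipode (R := k)) LinearMap.id
            (Coalgebra.comul (R := k) (f w))) = algebraMap k B (Coalgebra.counit (f w)) :=
          HopfAlgebra.mul_antipode_rTensor_comul_apply (f w)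
        rw [this, hcounit w]
        simp [myunit]
      · rw [myconv_apply, hmap]
        have hmm : TensorProduct.map f.toLinearMap f.toLinearMap
            (Coalgebra.comul (R := k) w)
            = TensorProduct.comm k B B (Coalgebra.comul (R := k) (f w)) := by
          rw [hanti w hw, hcc]
        rw [hmm, skew_map hSB (f w), hcounit w]
        simp [myunit]
    refine LinearMap.ext fun a => ?_
    have ha : a ∈ S₁ ⊔ S₂ := by rw [hspan]; trivial
    obtain ⟨s, hs, t, ht, rfl⟩ := Submodule.mem_sup.mp ha
    rw [map_add, map_add, key s (Or.inl hs), key t (Or.inr ht)]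
  have huniq := myconv_inv_unique (Coalgebra.comul (R := k)) (Coalgebra.counit (R := k))
    hcoA Coalgebra.rTensor_counit_comp_comul Coalgebra.lTensor_counit_comp_comul hl hr
  intro a
  have := congr($huniq a)
  simpa [hL, hR] using this
end
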